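/- Let p be a prime and let X be a p-semidivisible topological additive commutative monoid such that for every x, y ∈ X the convex hull conv({x, y}) has compact closure. If f : X → ℝ ∪ {−∞} is convex and lower semicontinuous, then f is convex-like: for all x, y ∈ X and every μ ∈ [0,1] there exists z ∈ X with f(z) ≤ μ·f(x) + (1−μ)·f(y). -/

import Mathlib

/-- A subset `A` of an additive commutative monoid is convex if whenever
`m • x = m₁ • x₁ + ⋯ + mₙ • xₙ` with `xᵢ ∈ A`, positive integers `mᵢ`
and `m = m₁ + ⋯ + mₙ`, then `x ∈ A`. -/
def MConvex {X : Type*} [AddCommMonoid X] (A : Set X) : Prop :=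
  ∀ (n : ℕ), 0 < n → ∀ (x : X) (xs : Fin n → X) (ms : Fin n → ℕ),
    (∀ i, xs i ∈ A) → (∀ i, 0 < ms i) →
    (∑ i, ms i) • x = ∑ i, ms i • xs i → x ∈ A

/-- The convex hull of `A`: the smallest convex set containing `A`. -/
def mconvHull {X : Type*} [AddCommMonoid X] (A : Set X) : Set X :=
  ⋂₀ {C : Set X | A ⊆ C ∧ MConvex C}

/-- A function `f : X → ℝ ∪ {-∞}` on an additive commutative monoid is convex if whenever
`m • x = m₁ • x₁ + ⋯ + mₙ • xₙ` with positive integers `mᵢ` and `m = m₁ + ⋯ + mₙ`,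
then `m * f x ≤ m₁ * f x₁ + ⋯ + mₙ * f xₙ`. -/
def MConvexFunE {X : Type*} [AddCommMonoid X] (f : X → EReal) : Prop :=
  ∀ (n : ℕ), 0 < n → ∀ (x : X) (xs : Fin n → X) (ms : Fin n → ℕ),
    (∀ i, 0 < ms i) → (∑ i, ms i) • x = ∑ i, ms i • xs i →
    (((∑ i, ms i : ℕ) : ℝ) : EReal) * f x ≤ ∑ i, (((ms i : ℕ) : ℝ) : EReal) * f (xs i)

lemma subset_mconvHull' {X : Type*} [AddCommMonoid X] (A : Set X) : A ⊆ mconvHull A :=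
  fun x hx => Set.mem_sInter.2 fun _ hC => hC.1 hx

lemma mconvex_mconvHull' {X : Type*} [AddCommMonoid X] (A : Set X) : MConvex (mconvHull A) := by
  intro n hn x xs ms hxs hms hsum
  refine Set.mem_sInter.2 fun C hC => ?_
  exact hC.2 n hn x xs ms (fun i => Set.mem_sInter.1 (hxs i) C hC) hms hsum

lemma exists_pow_smul' {X : Type*} [AddCommMonoid X] {p : ℕ}
    (hdiv : ∀ x : X, ∃ y : X, x = p • y) (k : ℕ) (x : X) : ∃ y, x = p ^ k • y := by
  induction k generalizing x with
  | zero => exact ⟨x, by simp⟩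
  | succ k ih =>
    obtain ⟨y1, hy1⟩ := hdiv x
    obtain ⟨y2, hy2⟩ := ih y1
    exact ⟨y2, by rw [hy1, hy2, ← mul_smul, ← pow_succ']⟩

lemma key' {X : Type*} [AddCommMonoid X] {p : ℕ}
    (hdiv : ∀ x : X, ∃ y : X, x = p • y)
    (f : X → EReal) (hconv : MConvexFunE f)
    (x y : X) (k a b : ℕ) (ha : 0 < a) (hb : 0 < b) (hab : a + b = p ^ k) :
    ∃ z ∈ mconvHull ({x, y} : Set X),
      (((a + b : ℕ) : ℝ) : EReal) * f z ≤ ((a : ℝ) : EReal) * f x + ((b : ℝ) : EReal) * f y := by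
  obtain ⟨z, hz⟩ := exists_pow_smul' hdiv k (a • x + b • y)
  have hsum : (∑ i : Fin 2, ![a, b] i) • z = ∑ i : Fin 2, ![a, b] i • ![x, y] i := by
    rw [Fin.sum_univ_two, Fin.sum_univ_two]
    simpa [hab] using hz.symm
  have hms : ∀ i : Fin 2, 0 < ![a, b] i := by
    intro i; fin_cases i <;> simpa
  have hmem : z ∈ mconvHull ({x, y} : Set X) := by
    refine mconvex_mconvHull' _ 2 two_pos z ![x, y] ![a, b] ?_ hms hsum
    intro i; fin_cases i
    · exact subset_mconvHull' _ (by simp)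
    · exact subset_mconvHull' _ (by simp)
  refine ⟨z, hmem, ?_⟩
  have := hconv 2 two_pos z ![x, y] ![a, b] hms hsum
  simpa [Fin.sum_univ_two] using this

theorem convex_lsc_implies_convexLike
    {X : Type*} [AddCommMonoid X] [TopologicalSpace X] [ContinuousAdd X]
    {p : ℕ} (hp : p.Prime) (hdiv : ∀ x : X, ∃ y : X, x = p • y)
    (hcomp : ∀ x y : X, IsCompact (closure (mconvHull ({x, y} : Set X))))
    (f : X → EReal) (hftop : ∀ x : X, f x ≠ ⊤)
    (hconv : MConvexFunE f) (hlsc : LowerSemicontinuous f) :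
    ∀ x y : X, ∀ μ : ℝ, 0 ≤ μ → μ ≤ 1 →
      ∃ z : X, f z ≤ (μ : EReal) * f x + ((1 - μ : ℝ) : EReal) * f y := by
  intro x y μ hμ0 hμ1
  have hp2 : 2 ≤ p := hp.two_le
  by_cases hbot : f x = ⊥ ∨ f y = ⊥
  · -- degenerate cases
    by_cases hx0 : f x = ⊥ ∧ μ = 0
    · refine ⟨y, ?_⟩
      rw [hx0.1, hx0.2]
      simp
    by_cases hy1 : f y = ⊥ ∧ μ = 1
    · refine ⟨x, ?_⟩
      rw [hy1.1, hy1.2]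
      simp
    -- target is ⊥; find w with f w = ⊥
    obtain ⟨w, -, hw⟩ := key' hdiv f hconv x y 1 1 (p - 1) one_pos (by omega)
      (by rw [pow_one]; omega)
    have hrhs : (((1 : ℕ) : ℝ) : EReal) * f x + (((p - 1 : ℕ) : ℝ) : EReal) * f y = ⊥ := by
      rcases hbot with h | h
      · rw [h]; simp [EReal.bot_add]
      · rw [h, EReal.mul_bot_of_pos (by exact_mod_cast (by omega : 0 < p - 1)), EReal.add_bot]
    rw [hrhs, le_bot_iff] at hw
    have hfw : f w = ⊥ := by
      by_contra h
      lift f w to ℝ using ⟨hftop w, h⟩ with t ht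
      rw [show (((1 + (p - 1) : ℕ) : ℝ) : EReal) * (t : EReal) = (((1 + (p-1) : ℕ) : ℝ) * t : ℝ) from
        (EReal.coe_mul _ _).symm] at hw
      exact EReal.coe_ne_bot _ hw
    exact ⟨w, hfw ▸ bot_le⟩
  · push_neg at hbot
    obtain ⟨r, hr⟩ : ∃ r : ℝ, f x = (r : ℝ) := ⟨(f x).toReal, (EReal.coe_toReal (hftop x) hbot.1).symm⟩
    obtain ⟨s, hs⟩ : ∃ s : ℝ, f y = (s : ℝ) := ⟨(f y).toReal, (EReal.coe_toReal (hftop y) hbot.2).symm⟩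
    set n : ℕ → ℕ := fun k => p ^ (k + 1) with hn
    have hn2 : ∀ k, 2 ≤ n k := fun k => le_trans hp2 (Nat.le_self_pow (Nat.succ_ne_zero k) p)
    set a : ℕ → ℕ := fun k => min (n k - 1) (max 1 ⌊μ * n k⌋₊) with ha
    have ha1 : ∀ k, 1 ≤ a k := fun k => le_min (by have := hn2 k; omega) (le_max_left _ _)
    have hale : ∀ k, a k ≤ n k - 1 := fun k => min_le_left _ _
    set b : ℕ → ℕ := fun k => n k - a k with hb
    have hb1 : ∀ k, 1 ≤ b k := fun k => by have := hn2 k; have := hale k; simp only [hb]; omega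
    have hab : ∀ k, a k + b k = n k := fun k => by have := hn2 k; have := hale k; simp only [hb]; omega
    have hkey := fun k => key' hdiv f hconv x y (k + 1) (a k) (b k) (ha1 k) (hb1 k) (hab k)
    choose z hzmem hzb using hkey
    set α : ℕ → ℝ := fun k => (a k : ℝ) / (n k : ℝ) with hα
    set c : ℕ → ℝ := fun k => α k * r + (1 - α k) * s with hc
    have hnpos : ∀ k, (0 : ℝ) < n k := fun k => by exact_mod_cast (by have := hn2 k; omega : 0 < n k)
    have hnc : ∀ k, (c k) * (n k : ℝ) = (a k : ℝ) * r + (b k : ℝ) * s := by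
      intro k
      have hbc : (b k : ℝ) = (n k : ℝ) - (a k : ℝ) := by
        have := hab k; push_cast [← this]; ring
      simp only [hc, hα, hbc]
      field_simp
      linear_combination ((a k : ℝ) * r - (a k : ℝ) * s) * mul_inv_cancel₀ (hnpos k).ne'
    have hzc : ∀ k, f (z k) ≤ (c k : EReal) := by
      intro k
      have h := hzb k
      rw [hr, hs] at h
      rcases eq_or_ne (f (z k)) ⊥ with hfz | hfz
      · rw [hfz]; exact bot_le
      lift f (z k) to ℝ using ⟨hftop (z k), hfz⟩ with t ht
      rw [show (((a k + b k : ℕ) : ℝ) : EReal) * (t : EReal) = (((a k + b k : ℕ) : ℝ) * t : ℝ) from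
            (EReal.coe_mul _ _).symm,
          show ((a k : ℝ) : EReal) * (r : EReal) = ((a k : ℝ) * r : ℝ) from (EReal.coe_mul _ _).symm,
          show ((b k : ℝ) : EReal) * (s : EReal) = ((b k : ℝ) * s : ℝ) from (EReal.coe_mul _ _).symm,
          ← EReal.coe_add, EReal.coe_le_coe_iff] at h
      rw [EReal.coe_le_coe_iff]
      have hnk : ((a k + b k : ℕ) : ℝ) = (n k : ℝ) := by rw [hab k]
      rw [hnk] at h
      have := hnc k
      nlinarith [hnpos k]
    -- convergence of α to μ
    have hntend : Filter.Tendsto (fun k => (n k : ℝ)) Filter.atTop Filter.atTop := by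
      have h1 : (1 : ℝ) < p := by exact_mod_cast hp.one_lt
      have := (tendsto_pow_atTop_atTop_of_one_lt h1).comp (Filter.tendsto_add_atTop_nat 1)
      refine this.congr fun k => ?_
      simp only [hn, Function.comp]
      push_cast
      ring
    have h2n : Filter.Tendsto (fun k => 2 / (n k : ℝ)) Filter.atTop (nhds 0) :=
      Filter.Tendsto.div_atTop tendsto_const_nhds hntend
    have hcast1 : ∀ k, ((n k - 1 : ℕ) : ℝ) = (n k : ℝ) - 1 := by
      intro k
      have := hn2 k
      push_cast [Nat.cast_sub (by omega : 1 ≤ n k)]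
      ring
    have hup : ∀ k, (a k : ℝ) ≤ μ * n k + 2 := by
      intro k
      set m := ⌊μ * n k⌋₊ with hm
      have hm1 : (m : ℝ) ≤ μ * n k := Nat.floor_le (mul_nonneg hμ0 (le_of_lt (hnpos k)))
      have haux : a k ≤ max 1 m := min_le_right _ _
      rcases Nat.eq_zero_or_pos m with h0 | h0
      · have h1 : a k ≤ 1 := by omega
        have h2 : (a k : ℝ) ≤ 1 := by exact_mod_cast h1
        nlinarith [hnpos k]
      · have h1 : a k ≤ m := by omega
        have h2 : (a k : ℝ) ≤ (m : ℝ) := by exact_mod_cast h1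
        linarith
    have hlow : ∀ k, μ * n k - 2 ≤ (a k : ℝ) := by
      intro k
      set m := ⌊μ * n k⌋₊ with hm
      have hm1 : (m : ℝ) ≤ μ * n k := Nat.floor_le (mul_nonneg hμ0 (le_of_lt (hnpos k)))
      have hm2 : μ * n k < (m : ℝ) + 1 := Nat.lt_floor_add_one _
      have hmn : m ≤ n k := by
        have h1 : (m : ℝ) ≤ (n k : ℝ) := le_trans hm1 (by nlinarith [hnpos k])
        exact_mod_cast h1
      rcases le_or_gt m (n k - 1) with hcase | hcase
      · rcases Nat.eq_zero_or_pos m with h0 | h0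
        · have h1 : (1 : ℝ) ≤ (a k : ℝ) := by exact_mod_cast ha1 k
          have hμn : μ * n k < 1 := by
            rw [h0] at hm2; simpa using hm2
          linarith
        · have h1 : m ≤ a k := by
            have hmax : max 1 m = m := max_eq_right h0
            simp only [ha, hmax]
            omega
          have h2 : (m : ℝ) ≤ (a k : ℝ) := by exact_mod_cast h1
          linarith
      · have heq : a k = n k - 1 := by
          have hmeq : m = n k := by omega
          have hmax : max 1 m = n k := by have := hn2 k; omega
          simp only [ha, hmax]
          omega
        rw [heq, hcast1 k]
        nlinarith [hnpos k]
    have hαlow : ∀ k, μ - 2 / (n k : ℝ) ≤ α k := by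
      intro k
      have hnk := hnpos k
      rw [hα, le_div_iff₀ hnk]
      have h2 : 2 / (n k : ℝ) * (n k : ℝ) = 2 := div_mul_cancel₀ _ (ne_of_gt hnk)
      nlinarith [hlow k]
    have hαup : ∀ k, α k ≤ μ + 2 / (n k : ℝ) := by
      intro k
      have hnk := hnpos k
      rw [hα, div_le_iff₀ hnk]
      have h2 : 2 / (n k : ℝ) * (n k : ℝ) = 2 := div_mul_cancel₀ _ (ne_of_gt hnk)
      nlinarith [hup k]
    have hαtend : Filter.Tendsto α Filter.atTop (nhds μ) := by
      have hl : Filter.Tendsto (fun k => μ - 2 / (n k : ℝ)) Filter.atTop (nhds μ) := by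
        simpa using tendsto_const_nhds.sub h2n
      have hu : Filter.Tendsto (fun k => μ + 2 / (n k : ℝ)) Filter.atTop (nhds μ) := by
        simpa using tendsto_const_nhds.add h2n
      exact tendsto_of_tendsto_of_tendsto_of_le_of_le hl hu hαlow hαup
    set L : ℝ := μ * r + (1 - μ) * s with hL
    have hctend : Filter.Tendsto c Filter.atTop (nhds L) :=
      (hαtend.mul_const r).add ((tendsto_const_nhds.sub hαtend).mul_const s)
    -- cluster point
    have hKcomp := hcomp x y
    have hFle : Filter.map z Filter.atTop ≤ Filter.principal (closure (mconvHull ({x, y} : Set X))) := by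
      rw [Filter.le_principal_iff, Filter.mem_map]
      exact Filter.Eventually.of_forall fun k => subset_closure (hzmem k)
    obtain ⟨w, hwmem, hcp⟩ := hKcomp.exists_clusterPt hFle
    refine ⟨w, ?_⟩
    rw [hr, hs]
    have hgoal : ((μ : ℝ) : EReal) * ((r : ℝ) : EReal) + (((1 - μ : ℝ)) : EReal) * ((s : ℝ) : EReal)
        = ((L : ℝ) : EReal) := by
      rw [hL]
      norm_cast
    rw [hgoal]
    by_contra hcon
    push_neg at hcon
    obtain ⟨r', hr'1, hr'2⟩ := EReal.exists_between_coe_real hcon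
    have hLr' : L < r' := by exact_mod_cast hr'1
    have ev1 : ∀ᶠ u in nhds w, (r' : EReal) < f u := hlsc w (r' : EReal) hr'2
    have evc : ∀ᶠ k in Filter.atTop, c k < r' := hctend.eventually_lt_const hLr'
    have ev2 : ∀ᶠ u in Filter.map z Filter.atTop, f u < (r' : EReal) := by
      rw [Filter.eventually_map]
      exact evc.mono fun k hk => lt_of_le_of_lt (hzc k) (by exact_mod_cast hk)
    haveI : (nhds w ⊓ Filter.map z Filter.atTop).NeBot := hcp
    have := ((ev1.filter_mono inf_le_left).and (ev2.filter_mono inf_le_right)).exists (f := nhds w ⊓ Filter.map z Filter.atTop)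
    obtain ⟨u, h1, h2⟩ := this
    exact absurd (h1.trans h2) (lt_irrefl _)
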